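/- arXiv:math/0506578 — 3 statements merged into one kernel-verified Lean document; each statement's English description precedes it below -/
import Mathlib

section
/- Fix n > 1, let r ≤ n, and let i₁ < i₂ < ⋯ < i_r be integers with 1 ≤ i₁ and i_r ≤ n. Then the preimage φ_{i₁}⁻¹(span(φ_{i₂}(V(n)) ∪ ⋯ ∪ φ_{i_r}(V(n)))) is exactly the span of the basis vectors v[a,b] with a, b ∈ {i₂, …, i_r} and a > b; consequently the intersection φ_{i₁}(V(n)) ∩ span(φ_{i₂}(V(n)) ∪ ⋯ ∪ φ_{i_r}(V(n))) has dimension C(r−1, 2). -/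
open Submodule

/-- Index type for the distinguished basis of `V(n)`: pairs `(j,i)` with `i < j`. -/
abbrev VIdx (n : ℕ) := {q : Fin n × Fin n // q.2 < q.1}

/-- Index type for the distinguished basis of `W(n)`: triples `(j,i,k)` with `i < j`, `i ≤ k`. -/
abbrev WIdx (n : ℕ) := {t : Fin n × Fin n × Fin n // t.2.1 < t.1 ∧ t.2.1 ≤ t.2.2}

/-- The vector space `V(n)` over `F`. -/
abbrev V (F : Type*) [Field F] (n : ℕ) := VIdx n → F

/-- The vector space `W(n)` over `F`. -/
abbrev W (F : Type*) [Field F] (n : ℕ) := WIdx n → F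

variable (F : Type*) [Field F] (n : ℕ)

/-- The vector `v[j,i]`, with the conventions `v[i,j] = -v[j,i]` and `v[i,i] = 0`. -/
noncomputable def v (j i : Fin n) : V F n :=
  if h : i < j then Pi.single (⟨(j, i), h⟩ : VIdx n) 1
  else if h' : j < i then -Pi.single (⟨(i, j), h'⟩ : VIdx n) 1
  else 0

/-- The vector `w[j,i,k]` (the basis vector when `i < j` and `i ≤ k`, zero otherwise). -/
noncomputable def w (j i k : Fin n) : W F n :=
  if h : i < j ∧ i ≤ k then Pi.single (⟨(j, i, k), h⟩ : WIdx n) 1 else 0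

/-- The linear map `φ_k : V(n) → W(n)` determined on basis vectors by
`φ_k(v[j,i]) = w[j,i,k]` if `i ≤ k`, and `φ_k(v[j,i]) = w[j,k,i] - w[i,k,j]` if `k < i`. -/
noncomputable def phi (k : Fin n) : V F n →ₗ[F] W F n :=
  (Pi.basisFun F (VIdx n)).constr F fun q =>
    if q.1.2 ≤ k then w F n q.1.1 q.1.2 k
    else w F n q.1.1 k q.1.2 - w F n q.1.2 k q.1.1

/-- The linear map `Φ_n : V(n)ⁿ → W(n)`, `Φ_n(x₁,…,x_n) = φ₁(x₁) + ⋯ + φ_n(x_n)`. -/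
noncomputable def Phi : (Fin n → V F n) →ₗ[F] W F n :=
  ∑ k : Fin n, (phi F n k).comp (LinearMap.proj k)

/-- For `X ≤ V(n)`, the subspace `X* ≤ W(n)`: the span of `φ₁(X) ∪ ⋯ ∪ φ_n(X)`. -/
noncomputable def starV (X : Submodule F (V F n)) : Submodule F (W F n) :=
  ⨆ k : Fin n, X.map (phi F n k)

/-- For `Y ≤ W(n)`, the subspace `Y* ≤ V(n)`: the intersection `⋂ₖ φ_k⁻¹(Y)`. -/
noncomputable def starW (Y : Submodule F (W F n)) : Submodule F (V F n) :=
  ⨅ k : Fin n, Y.comap (phi F n k)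

section Aux

variable {F} {n}

private lemma w_apply (j i k : Fin n) (T : WIdx n) :
    w F n j i k T = if T.1 = (j, i, k) then (1 : F) else 0 := by
  rw [w]
  by_cases h : i < j ∧ i ≤ k
  · rw [dif_pos h, Pi.single_apply]
    simp [Subtype.ext_iff]
  · have hT : T.1 ≠ (j, i, k) := by
      intro hT
      apply h
      have h2 := T.2
      rw [hT] at h2
      exact h2
    rw [dif_neg h, if_neg hT]
    rfl

private lemma phi_apply' (k : Fin n) (x : V F n) (T : WIdx n) :
    phi F n k x T = ∑ q : VIdx n, x q *
      (if q.1.2 ≤ k then (if T.1 = (q.1.1, q.1.2, k) then (1 : F) else 0)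
       else (if T.1 = (q.1.1, k, q.1.2) then (1 : F) else 0) -
            (if T.1 = (q.1.2, k, q.1.1) then (1 : F) else 0)) := by
  rw [phi, Module.Basis.constr_apply_fintype, Pi.basisFun_equivFun]
  simp only [LinearEquiv.refl_apply, Finset.sum_apply, Pi.smul_apply, smul_eq_mul]
  refine Finset.sum_congr rfl fun q _ => ?_
  congr 1
  by_cases hc : q.1.2 ≤ k
  · rw [if_pos hc, if_pos hc, w_apply]
  · rw [if_neg hc, if_neg hc, Pi.sub_apply, w_apply, w_apply]

private lemma phi_eval₁ (k : Fin n) (x : V F n) {j i : Fin n} (hij : i < j) (hik : i ≤ k) :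
    phi F n k x ⟨(j, i, k), ⟨hij, hik⟩⟩ = x ⟨(j, i), hij⟩ := by
  rw [phi_apply', Finset.sum_eq_single (⟨(j, i), hij⟩ : VIdx n)]
  · simp only [Prod.mk.injEq]
    split_ifs <;>
      first
      | ring1
      | (exfalso; simp only [ne_eq, Subtype.mk.injEq, Prod.mk.injEq, Fin.ext_iff, Fin.lt_def,
          Fin.le_def, not_and, true_and, and_true] at *; omega)
  · rintro ⟨⟨a, b⟩, hab⟩ - hq
    have hab' : (b : ℕ) < (a : ℕ) := hab
    simp only [Prod.mk.injEq]
    split_ifs <;>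
      first
      | ring1
      | (exfalso; simp only [ne_eq, Subtype.mk.injEq, Prod.mk.injEq, Fin.ext_iff, Fin.lt_def,
          Fin.le_def, not_and, true_and, and_true] at *; omega)
  · intro h; exact absurd (Finset.mem_univ _) h

private lemma phi_eval₂ (k : Fin n) (x : V F n) {j i : Fin n} (hij : i < j) (hki : k < i) :
    phi F n k x ⟨(j, k, i), ⟨hki.trans hij, hki.le⟩⟩ = x ⟨(j, i), hij⟩ := by
  rw [phi_apply', Finset.sum_eq_single (⟨(j, i), hij⟩ : VIdx n)]
  · simp only [Prod.mk.injEq]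
    split_ifs <;>
      first
      | ring1
      | (exfalso; simp only [ne_eq, Subtype.mk.injEq, Prod.mk.injEq, Fin.ext_iff, Fin.lt_def,
          Fin.le_def, not_and, true_and, and_true] at *; omega)
  · rintro ⟨⟨a, b⟩, hab⟩ - hq
    have hab' : (b : ℕ) < (a : ℕ) := hab
    simp only [Prod.mk.injEq]
    split_ifs <;>
      first
      | ring1
      | (exfalso; simp only [ne_eq, Subtype.mk.injEq, Prod.mk.injEq, Fin.ext_iff, Fin.lt_def,
          Fin.le_def, not_and, true_and, and_true] at *; omega)
  · intro h; exact absurd (Finset.mem_univ _) h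

private lemma phi_eval₃ (k : Fin n) (x : V F n) {j i : Fin n} (hij : i < j) (hki : k < i) :
    phi F n k x ⟨(i, k, j), ⟨hki, (hki.trans hij).le⟩⟩ = - x ⟨(j, i), hij⟩ := by
  rw [phi_apply', Finset.sum_eq_single (⟨(j, i), hij⟩ : VIdx n)]
  · simp only [Prod.mk.injEq]
    split_ifs <;>
      first
      | ring1
      | (exfalso; simp only [ne_eq, Subtype.mk.injEq, Prod.mk.injEq, Fin.ext_iff, Fin.lt_def,
          Fin.le_def, not_and, true_and, and_true] at *; omega)
  · rintro ⟨⟨a, b⟩, hab⟩ - hq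
    have hab' : (b : ℕ) < (a : ℕ) := hab
    simp only [Prod.mk.injEq]
    split_ifs <;>
      first
      | ring1
      | (exfalso; simp only [ne_eq, Subtype.mk.injEq, Prod.mk.injEq, Fin.ext_iff, Fin.lt_def,
          Fin.le_def, not_and, true_and, and_true] at *; omega)
  · intro h; exact absurd (Finset.mem_univ _) h

private lemma phi_eval₀ (k : Fin n) (x : V F n) {J m K : Fin n} (h1 : m < J) (h2 : m ≤ K)
    (hm : m ≠ k) (hK : K ≠ k) : phi F n k x ⟨(J, m, K), ⟨h1, h2⟩⟩ = 0 := by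
  rw [phi_apply']
  refine Finset.sum_eq_zero fun q _ => ?_
  obtain ⟨⟨a, b⟩, hab⟩ := q
  have hab' : (b : ℕ) < (a : ℕ) := hab
  simp only [Prod.mk.injEq]
  split_ifs <;>
    first
    | ring1
    | (exfalso; simp only [ne_eq, Subtype.mk.injEq, Prod.mk.injEq, Fin.ext_iff, Fin.lt_def,
        Fin.le_def, not_and, true_and, and_true] at *; omega)

private lemma phi_single (k : Fin n) (q : VIdx n) :
    phi F n k (Pi.single q 1) =
      if q.1.2 ≤ k then w F n q.1.1 q.1.2 k
      else w F n q.1.1 k q.1.2 - w F n q.1.2 k q.1.1 := by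
  have h := Module.Basis.constr_basis (Pi.basisFun F (VIdx n)) F
    (fun q : VIdx n => if q.1.2 ≤ k then w F n q.1.1 q.1.2 k
      else w F n q.1.1 k q.1.2 - w F n q.1.2 k q.1.1) q
  rw [Pi.basisFun_apply] at h
  rw [phi]
  exact h

private lemma phi_key {k i j : Fin n} (hki : k < i) (hij : i < j) :
    phi F n k (v F n j i) = phi F n i (v F n j k) - phi F n j (v F n i k) := by
  rw [v, dif_pos hij, v, dif_pos (hki.trans hij), v, dif_pos hki,
      phi_single, phi_single, phi_single]
  rw [if_neg (not_le.mpr hki), if_pos hki.le, if_pos (hki.trans hij).le]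

private lemma phi_inj (k : Fin n) : Function.Injective (phi F n k) := by
  rw [← LinearMap.ker_eq_bot]
  refine (Submodule.eq_bot_iff _).mpr fun x hx => ?_
  have hx' : phi F n k x = 0 := hx
  funext q
  obtain ⟨⟨j, i⟩, hij⟩ := q
  by_cases hik : i ≤ k
  · have h := phi_eval₁ k x hij hik
    rw [hx'] at h
    simpa using h.symm
  · have h := phi_eval₂ k x hij (not_le.mp hik)
    rw [hx'] at h
    simpa using h.symm

end Aux

private abbrev SIdx (r : ℕ) := {pp : Fin r × Fin r // pp.2 < pp.1}

private def sIdxEquiv (r : ℕ) : SIdx r ≃ Σ a : Fin r, Fin a.1 where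
  toFun pp := ⟨pp.1.1, ⟨pp.1.2.1, pp.2⟩⟩
  invFun s := ⟨(s.1, ⟨s.2.1, lt_trans s.2.2 s.1.2⟩), s.2.2⟩
  left_inv pp := rfl
  right_inv s := rfl

private lemma sIdx_card (r : ℕ) : Fintype.card (SIdx r) = r.choose 2 := by
  rw [Fintype.card_congr (sIdxEquiv r), Fintype.card_sigma]
  simp only [Fintype.card_fin]
  rw [Fin.sum_univ_eq_sum_range (fun i => i) r, Finset.sum_range_id, Nat.choose_two_right]


/-- Let `i₁ < i₂ < ⋯ < i_{r+1}` be indices in `{1,…,n}` (given by a strictly monotone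
`ι : Fin (r+1) → Fin n`).  Then the preimage under `φ_{i₁}` of the span of the images
`φ_{i₂}(V(n)), …, φ_{i_{r+1}}(V(n))` is exactly the span of the vectors `v[a,b]` with
`a, b ∈ {i₂,…,i_{r+1}}` and `a > b`; consequently the intersection
`φ_{i₁}(V(n)) ∩ span(φ_{i₂}(V(n)) ∪ ⋯)` has dimension `C(r,2)` (with `r+1` indices in all,
this is `C((r+1)-1, 2)`). -/
theorem statement3 (p : ℕ) [Fact p.Prime] (hp2 : p ≠ 2) (n : ℕ) (hn : 1 < n)
    (r : ℕ) (hr : r + 1 ≤ n) (ι : Fin (r + 1) → Fin n) (hι : StrictMono ι) :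
    Submodule.comap (phi (ZMod p) n (ι 0))
        (⨆ t : Fin r, LinearMap.range (phi (ZMod p) n (ι t.succ))) =
      Submodule.span (ZMod p)
        {x : V (ZMod p) n | ∃ a b : Fin r, b < a ∧ x = v (ZMod p) n (ι a.succ) (ι b.succ)} ∧
    Module.finrank (ZMod p)
        ↥(LinearMap.range (phi (ZMod p) n (ι 0)) ⊓
          ⨆ t : Fin r, LinearMap.range (phi (ZMod p) n (ι t.succ))) = r.choose 2 := by
  classical
  set k0 := ι 0 with hk0
  have hlt : ∀ t : Fin r, k0 < ι t.succ := fun t => hι (Fin.succ_pos t)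
  set S := ⨆ t : Fin r, LinearMap.range (phi (ZMod p) n (ι t.succ)) with hS
  set G := {x : V (ZMod p) n | ∃ a b : Fin r, b < a ∧ x = v (ZMod p) n (ι a.succ) (ι b.succ)}
    with hGdef
  have hspan_le : Submodule.span (ZMod p) G ≤ Submodule.comap (phi (ZMod p) n k0) S := by
    rw [Submodule.span_le]
    rintro x ⟨a, b, hba, rfl⟩
    have hIJ : ι b.succ < ι a.succ := hι (Fin.succ_lt_succ_iff.mpr hba)
    have hkI : k0 < ι b.succ := hlt b
    simp only [SetLike.mem_coe, Submodule.mem_comap]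
    rw [phi_key hkI hIJ]
    refine sub_mem ?_ ?_
    · exact (le_iSup (fun t : Fin r => LinearMap.range (phi (ZMod p) n (ι t.succ))) b)
        (LinearMap.mem_range_self _ _)
    · exact (le_iSup (fun t : Fin r => LinearMap.range (phi (ZMod p) n (ι t.succ))) a)
        (LinearMap.mem_range_self _ _)
  have hzero : ∀ y : W (ZMod p) n, y ∈ S → ∀ (J m K : Fin n) (h1 : m < J) (h2 : m ≤ K),
      (∀ t : Fin r, m ≠ ι t.succ) → (∀ t : Fin r, K ≠ ι t.succ) →
      y ⟨(J, m, K), ⟨h1, h2⟩⟩ = 0 := by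
    intro y hy J m K h1 h2 hm hK
    have hle : S ≤ LinearMap.ker
        ((LinearMap.proj (⟨(J, m, K), ⟨h1, h2⟩⟩ : WIdx n)) :
          W (ZMod p) n →ₗ[ZMod p] ZMod p) := by
      refine iSup_le fun t => ?_
      rintro z ⟨u, rfl⟩
      exact LinearMap.mem_ker.mpr (phi_eval₀ (ι t.succ) u h1 h2 (hm t) (hK t))
    exact LinearMap.mem_ker.mp (hle hy)
  have hcom : Submodule.comap (phi (ZMod p) n k0) S = Submodule.span (ZMod p) G := by
    refine le_antisymm ?_ hspan_le
    intro x hx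
    rw [Submodule.mem_comap] at hx
    have hcoef : ∀ (j i : Fin n) (hij : i < j), x ⟨(j, i), hij⟩ ≠ 0 →
        ∃ a b : Fin r, b < a ∧ i = ι b.succ ∧ j = ι a.succ := by
      intro j i hij hx0
      by_cases hik : i ≤ k0
      · exfalso
        have hmne : ∀ t : Fin r, i ≠ ι t.succ :=
          fun t h => absurd (h ▸ hlt t) (not_lt.mpr hik)
        have hkne : ∀ t : Fin r, k0 ≠ ι t.succ := fun t => (hlt t).ne
        have h := hzero _ hx j i k0 hij hik hmne hkne
        rw [phi_eval₁ k0 x hij hik] at h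
        exact hx0 h
      · push_neg at hik
        have hbex : ∃ b : Fin r, i = ι b.succ := by
          by_contra hb
          push_neg at hb
          have h := hzero _ hx j k0 i (hik.trans hij) hik.le (fun t => (hlt t).ne) hb
          rw [phi_eval₂ k0 x hij hik] at h
          exact hx0 h
        have haex : ∃ a : Fin r, j = ι a.succ := by
          by_contra ha
          push_neg at ha
          have h := hzero _ hx i k0 j hik (hik.trans hij).le (fun t => (hlt t).ne) ha
          rw [phi_eval₃ k0 x hij hik] at h
          exact hx0 (neg_eq_zero.mp h)
        obtain ⟨b, hbi⟩ := hbex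
        obtain ⟨a, haj⟩ := haex
        refine ⟨a, b, ?_, hbi, haj⟩
        have hlt2 : ι b.succ < ι a.succ := by rw [← hbi, ← haj]; exact hij
        exact Fin.succ_lt_succ_iff.mp (hι.lt_iff_lt.mp hlt2)
    have hxsum : x = ∑ q : VIdx n, x q • (Pi.single q 1 : V (ZMod p) n) := by
      funext q'
      rw [Finset.sum_apply]
      simp [Pi.single_apply]
    rw [hxsum]
    refine Submodule.sum_mem _ fun q _ => ?_
    by_cases hq0 : x q = 0
    · rw [hq0, zero_smul]; exact Submodule.zero_mem _
    · obtain ⟨⟨j, i⟩, hij⟩ := q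
      obtain ⟨a, b, hba, hbi, haj⟩ := hcoef j i hij hq0
      refine Submodule.smul_mem _ _ (Submodule.subset_span ?_)
      refine ⟨a, b, hba, ?_⟩
      subst hbi haj
      rw [v, dif_pos hij]
  refine ⟨hcom, ?_⟩
  have hinj : Function.Injective (phi (ZMod p) n k0) := phi_inj k0
  have hrange : LinearMap.range (phi (ZMod p) n k0) ⊓ S
      = Submodule.map (phi (ZMod p) n k0) (Submodule.span (ZMod p) G) := by
    rw [← hcom, Submodule.map_comap_eq]
  rw [hrange,
    ← LinearEquiv.finrank_eq (Submodule.equivMapOfInjective _ hinj (Submodule.span (ZMod p) G))]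
  have hGr : G = Set.range (fun pp : SIdx r =>
      (Pi.single (⟨(ι pp.1.1.succ, ι pp.1.2.succ), hι (Fin.succ_lt_succ_iff.mpr pp.2)⟩ : VIdx n)
        (1 : ZMod p) : V (ZMod p) n)) := by
    ext x
    constructor
    · rintro ⟨a, b, hba, rfl⟩
      refine ⟨⟨(a, b), hba⟩, ?_⟩
      rw [v, dif_pos (hι (Fin.succ_lt_succ_iff.mpr hba))]
    · rintro ⟨⟨⟨a, b⟩, hba⟩, rfl⟩
      exact ⟨a, b, hba, by rw [v, dif_pos (hι (Fin.succ_lt_succ_iff.mpr hba))]⟩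
  have hli : LinearIndependent (ZMod p) (fun pp : SIdx r =>
      (Pi.single (⟨(ι pp.1.1.succ, ι pp.1.2.succ), hι (Fin.succ_lt_succ_iff.mpr pp.2)⟩ : VIdx n)
        (1 : ZMod p) : V (ZMod p) n)) := by
    have hbe : (fun pp : SIdx r =>
        (Pi.single (⟨(ι pp.1.1.succ, ι pp.1.2.succ), hι (Fin.succ_lt_succ_iff.mpr pp.2)⟩ : VIdx n)
          (1 : ZMod p) : V (ZMod p) n))
        = (⇑(Pi.basisFun (ZMod p) (VIdx n)) ∘ (fun pp : SIdx r =>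
            (⟨(ι pp.1.1.succ, ι pp.1.2.succ),
              hι (Fin.succ_lt_succ_iff.mpr pp.2)⟩ : VIdx n))) := by
      funext pp
      rw [Function.comp_apply, Pi.basisFun_apply]
    rw [hbe]
    refine (Pi.basisFun (ZMod p) (VIdx n)).linearIndependent.comp _ ?_
    rintro ⟨⟨a, b⟩, hba⟩ ⟨⟨a', b'⟩, hba'⟩ hpe
    simp only [Subtype.mk.injEq, Prod.mk.injEq] at hpe ⊢
    exact ⟨Fin.succ_injective _ (hι.injective hpe.1), Fin.succ_injective _ (hι.injective hpe.2)⟩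
  rw [hGr, finrank_span_eq_card hli, sIdx_card]
end

section
/- Fix n > 1 and let X be a subspace of V(n). If dim(X) = 1 then dim(X*) = n, and if dim(X) = 2 then dim(X*) = 2n. -/
open Submodule

variable (F : Type*) [Field F] (n : ℕ)

namespace Stmt8Aux

variable {F : Type*} [Field F] {n : ℕ}

/-- Coefficient of `x` on the basis vector indexed by `(a,b)` (zero unless `b < a`). -/
def cf (x : V F n) (a b : Fin n) : F := if h : b < a then x ⟨(a, b), h⟩ else 0

lemma cf_of_not {a b : Fin n} (x : V F n) (h : ¬ b < a) : cf x a b = 0 := dif_neg h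

lemma cf_eq {a b : Fin n} (x : V F n) (h : b < a) : cf x a b = x ⟨(a, b), h⟩ := dif_pos h

lemma cf_zero (a b : Fin n) : cf (0 : V F n) a b = 0 := by
  unfold cf; split <;> simp

lemma cf_add (x y : V F n) (a b : Fin n) : cf (x + y) a b = cf x a b + cf y a b := by
  unfold cf; split <;> simp

lemma cf_smul (c : F) (x : V F n) (a b : Fin n) : cf (c • x) a b = c * cf x a b := by
  unfold cf; split <;> simp

/-- Antisymmetrized coefficient. -/
def Cf (x : V F n) (a b : Fin n) : F := cf x a b - cf x b a

lemma Cf_eq {a b : Fin n} (x : V F n) (h : b < a) : Cf x a b = x ⟨(a, b), h⟩ := by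
  rw [Cf, cf_eq x h, cf_of_not x (lt_asymm h), sub_zero]

lemma Cf_antisymm (x : V F n) (a b : Fin n) : Cf x a b = - Cf x b a := by
  rw [Cf, Cf]; ring

lemma Cf_zero (a b : Fin n) : Cf (0 : V F n) a b = 0 := by
  rw [Cf, cf_zero, cf_zero, sub_zero]

lemma Cf_smul (c : F) (x : V F n) (a b : Fin n) : Cf (c • x) a b = c * Cf x a b := by
  rw [Cf, Cf, cf_smul, cf_smul]; ring

lemma Cf_add (x y : V F n) (a b : Fin n) : Cf (x + y) a b = Cf x a b + Cf y a b := by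
  rw [Cf, Cf, Cf, cf_add, cf_add]; ring

lemma w_apply (j i k : Fin n) (t : WIdx n) :
    w F n j i k t = if t.1 = (j, i, k) then 1 else 0 := by
  unfold w
  split
  · next h =>
    rw [Pi.single_apply]
    congr 1
    simp [Subtype.ext_iff]
  · next h =>
    rw [if_neg, Pi.zero_apply]
    intro ht
    have := t.2
    rw [ht] at this
    exact h this

end Stmt8Aux
namespace Stmt8Aux

variable {F : Type*} [Field F] {n : ℕ}

lemma sum_proj (P : Prop) [Decidable P] (x : V F n) (a b : Fin n) :
    (∑ q : VIdx n, if P ∧ q.1 = (a, b) then x q else 0) = if P then cf x a b else 0 := by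
  by_cases hP : P
  · simp only [hP, true_and, if_true]
    by_cases hba : b < a
    · rw [Finset.sum_eq_single (⟨(a, b), hba⟩ : VIdx n)]
      · rw [if_pos rfl, cf_eq x hba]
      · intro q _ hq
        rw [if_neg]
        intro hq1
        exact hq (Subtype.ext hq1)
      · intro h; exact absurd (Finset.mem_univ _) h
    · rw [cf_of_not x hba, Finset.sum_eq_zero]
      intro q _
      rw [if_neg]
      intro hq1
      have := q.2
      rw [hq1] at this
      exact hba this
  · simp [hP]

lemma phi_apply (k : Fin n) (x : V F n) (a b c : Fin n) (hba : b < a) (hbc : b ≤ c) :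
    phi F n k x ⟨(a, b, c), ⟨hba, hbc⟩⟩ =
      (if k = c then cf x a b else 0) +
      ((if k = b then (if b < c then cf x a c else 0) else 0) -
       (if k = b then cf x c a else 0)) := by
  have h1 : phi F n k x = ∑ q : VIdx n, x q •
      (if q.1.2 ≤ k then w F n q.1.1 q.1.2 k
       else w F n q.1.1 k q.1.2 - w F n q.1.2 k q.1.1) := by
    rw [phi, Module.Basis.constr_apply_fintype]
    simp [Pi.basisFun_equivFun]
  rw [h1, Finset.sum_apply]
  simp only [Pi.smul_apply, smul_eq_mul]
  have key : ∀ q : VIdx n, x q *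
      ((if q.1.2 ≤ k then w F n q.1.1 q.1.2 k
        else w F n q.1.1 k q.1.2 - w F n q.1.2 k q.1.1) (⟨(a, b, c), ⟨hba, hbc⟩⟩ : WIdx n)) =
      (if (k = c) ∧ q.1 = (a, b) then x q else 0) +
      ((if (k = b ∧ b < c) ∧ q.1 = (a, c) then x q else 0) -
       (if (k = b) ∧ q.1 = (c, a) then x q else 0)) := by
    intro q
    obtain ⟨⟨j, i⟩, hij⟩ := q
    by_cases hik : i ≤ k
    · rw [if_pos hik, w_apply]
      simp only [Prod.mk.injEq]
      split_ifs <;> first | ring1 | (exfalso; omega)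
    · rw [if_neg hik, Pi.sub_apply, w_apply, w_apply]
      simp only [Prod.mk.injEq]
      split_ifs <;> first | ring1 | (exfalso; omega)
  rw [Finset.sum_congr rfl (fun q _ => key q)]
  rw [Finset.sum_add_distrib, Finset.sum_sub_distrib, sum_proj, sum_proj, sum_proj]
  congr 1
  congr 1
  by_cases hkb : k = b
  · by_cases hbc' : b < c <;> simp [hkb, hbc']
  · simp [hkb]

end Stmt8Aux
namespace Stmt8Aux

variable {F : Type*} [Field F] {n : ℕ}

lemma sumPhi_apply (f : Fin n → V F n) (a b c : Fin n) (hba : b < a) (hbc : b ≤ c) :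
    (∑ k : Fin n, phi F n k (f k)) ⟨(a, b, c), ⟨hba, hbc⟩⟩ =
      cf (f c) a b + ((if b < c then cf (f b) a c else 0) - cf (f b) c a) := by
  rw [Finset.sum_apply]
  rw [Finset.sum_congr rfl (fun k _ => phi_apply k (f k) a b c hba hbc)]
  rw [Finset.sum_add_distrib, Finset.sum_sub_distrib]
  rw [Finset.sum_ite_eq' Finset.univ c (fun k => cf (f k) a b)]
  rw [Finset.sum_ite_eq' Finset.univ b (fun k => if b < c then cf (f k) a c else 0)]
  rw [Finset.sum_ite_eq' Finset.univ b (fun k => cf (f k) c a)]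
  simp

section KernelEqs

variable {f : Fin n → V F n} (hsum : (∑ k : Fin n, phi F n k (f k)) = 0)
include hsum

lemma eqE (a b c : Fin n) (hba : b < a) (hbc : b ≤ c) :
    cf (f c) a b + ((if b < c then cf (f b) a c else 0) - cf (f b) c a) = 0 := by
  rw [← sumPhi_apply f a b c hba hbc, hsum]
  rfl

lemma diag1 {a b : Fin n} (hba : b < a) : cf (f b) a b = 0 := by
  have h := eqE hsum a b b hba le_rfl
  rw [if_neg (lt_irrefl b), cf_of_not (f b) (by omega : ¬ a < b)] at h
  linear_combination h

lemma diag2 {a b : Fin n} (hba : b < a) : cf (f a) a b = 0 := by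
  have h := eqE hsum a b a hba (le_of_lt hba)
  rw [cf_of_not (f b) (by omega : ¬ a < a)] at h
  simp only [if_pos hba] at h
  linear_combination h

lemma master_cf {a b : Fin n} (hba : b < a) (k : Fin n) :
    cf (f k) a b = cf (f b) k a - cf (f b) a k := by
  rcases lt_trichotomy k b with hkb | rfl | hbk
  · have h := eqE hsum a k b (by omega) (le_of_lt hkb)
    rw [if_pos hkb, cf_of_not (f k) (by omega : ¬ a < b)] at h
    rw [cf_of_not (f b) (by omega : ¬ a < k)]
    linear_combination h
  · rw [diag1 hsum hba, cf_of_not (f k) (by omega : ¬ a < k)]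
    ring
  · rcases lt_trichotomy k a with hka | rfl | hak
    · have h := eqE hsum a b k hba (le_of_lt hbk)
      rw [if_pos hbk, cf_of_not (f b) (by omega : ¬ a < k)] at h
      rw [cf_of_not (f b) (by omega : ¬ a < k)]
      linear_combination h
    · rw [diag2 hsum hba, cf_of_not (f b) (by omega : ¬ k < k)]
      ring
    · have h := eqE hsum a b k hba (le_of_lt hbk)
      rw [if_pos hbk, cf_of_not (f b) (by omega : ¬ k < a)] at h
      rw [cf_of_not (f b) (by omega : ¬ k < a)]
      linear_combination h

lemma diagC (a b : Fin n) : Cf (f b) a b = 0 := by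
  rcases lt_trichotomy a b with hab | rfl | hba
  · rw [Cf, cf_of_not (f b) (by omega : ¬ b < a), diag2 hsum hab]
    ring
  · rw [Cf]; ring
  · rw [Cf, cf_of_not (f b) (by omega : ¬ a < b), diag1 hsum hba]
    ring

lemma masterC (k a b : Fin n) : Cf (f k) a b = Cf (f b) k a := by
  rcases lt_trichotomy b a with hba | rfl | hab
  · rw [Cf, Cf, cf_of_not (f k) (by omega : ¬ a < b), master_cf hsum hba k]
    ring
  · rw [Cf, diagC hsum k b]
    ring
  · -- a < b
    rcases lt_trichotomy k a with hka | rfl | hak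
    · -- k < a < b
      have m2 := master_cf hsum hka b
      have z2 := cf_of_not (f b) (by omega : ¬ a < k)
      simp only [Cf]
      linear_combination m2 - z2
    · -- k = a
      simp only [Cf]
      rw [cf_of_not (f k) (by omega : ¬ b < k), diag1 hsum hab,
        cf_of_not (f b) (by omega : ¬ k < k)]
      try ring
    · -- a < k
      have z1 := cf_of_not (f k) (by omega : ¬ b < a)
      have z2 := cf_of_not (f b) (by omega : ¬ k < a)
      have m1 := master_cf hsum hab k
      have m2 := master_cf hsum hak b
      simp only [Cf]
      linear_combination z1 - m1 - m2 + z2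

end KernelEqs

end Stmt8Aux
namespace Stmt8Aux

variable {F : Type*} [Field F] {n : ℕ}

lemma ftriv1 {f : Fin n → V F n} (hsum : (∑ k : Fin n, phi F n k (f k)) = 0)
    {X : Submodule F (V F n)} (hmem : ∀ k, f k ∈ X)
    (hX : Module.finrank F ↥X = 1) : ∀ k, f k = 0 := by
  obtain ⟨v0, hv0, hgen⟩ := finrank_eq_one_iff'.mp hX
  have hx0 : (v0 : V F n) ≠ 0 := fun h => hv0 (Subtype.ext h)
  obtain ⟨q, hq⟩ : ∃ q, (v0 : V F n) q ≠ 0 := by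
    by_contra h; push_neg at h; exact hx0 (funext h)
  obtain ⟨⟨a, b⟩, hba⟩ := q
  have hc : ∀ k, ∃ c : F, f k = c • (v0 : V F n) := by
    intro k
    obtain ⟨c, hck⟩ := hgen ⟨f k, hmem k⟩
    refine ⟨c, ?_⟩
    have h2 := congrArg (Subtype.val) hck
    simpa using h2.symm
  have key : ∀ k, Cf (f k) a b = 0 → f k = 0 := by
    intro k hk
    obtain ⟨c, hck⟩ := hc k
    rw [hck, Cf_smul, Cf_eq (v0 : V F n) hba] at hk
    rcases mul_eq_zero.mp hk with hc0 | h0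
    · rw [hck, hc0, zero_smul]
    · exact absurd h0 hq
  have hb : f b = 0 := key b (diagC hsum a b)
  intro k
  apply key k
  rw [masterC hsum k a b, hb, Cf_zero]

lemma ftriv2 {f : Fin n → V F n} (hsum : (∑ k : Fin n, phi F n k (f k)) = 0)
    {X : Submodule F (V F n)} (hmem : ∀ k, f k ∈ X)
    (hX : Module.finrank F ↥X = 2) : ∀ k, f k = 0 := by
  intro m
  by_contra hm
  obtain ⟨q, hq⟩ : ∃ q, f m q ≠ 0 := by
    by_contra h; push_neg at h; exact hm (funext h)
  obtain ⟨⟨j, i⟩, hij⟩ := q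
  have hCm : Cf (f m) j i = f m ⟨(j, i), hij⟩ := Cf_eq (f m) hij
  have hmi : m ≠ i := by
    intro h
    subst h
    apply hq
    rw [← hCm]
    exact diagC hsum j m
  have hmj : m ≠ j := by
    intro h
    subst h
    apply hq
    rw [← hCm, Cf_antisymm, diagC hsum i m, neg_zero]
  set c : F := f m ⟨(j, i), hij⟩ with hcdef
  have hui : Cf (f i) m j = c := by rw [← masterC hsum m j i, hCm]
  have huj : Cf (f j) m i = -c := by
    have h := masterC hsum m i j
    rw [Cf_antisymm (f m) i j, hCm] at h
    exact h.symm
  have hdep : ¬ LinearIndependent F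
      ![(⟨f m, hmem m⟩ : ↥X), ⟨f i, hmem i⟩, ⟨f j, hmem j⟩] := by
    intro h
    have hcard := h.fintype_card_le_finrank
    rw [hX] at hcard
    simp at hcard
  obtain ⟨g, hg, i0, hi0⟩ := Fintype.not_linearIndependent_iff.mp hdep
  have hg' : g 0 • f m + g 1 • f i + g 2 • f j = 0 := by
    have h2 := congrArg (X.subtype) hg
    rw [map_sum] at h2
    simpa [Fin.sum_univ_three] using h2
  have dmj : Cf (f m) j m = 0 := diagC hsum j m
  have dmi : Cf (f m) i m = 0 := diagC hsum i m
  have hexp : ∀ a b : Fin n, Cf (g 0 • f m + g 1 • f i + g 2 • f j) a b =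
      g 0 * Cf (f m) a b + g 1 * Cf (f i) a b + g 2 * Cf (f j) a b := by
    intro a b
    rw [Cf_add, Cf_add, Cf_smul, Cf_smul, Cf_smul]
  have e1 : g 0 * c = 0 := by
    have h1 : Cf (g 0 • f m + g 1 • f i + g 2 • f j) j i = 0 := by rw [hg', Cf_zero]
    rw [hexp] at h1
    have dji : Cf (f i) j i = 0 := diagC hsum j i
    have djj : Cf (f j) j i = 0 := by rw [Cf_antisymm, diagC hsum i j, neg_zero]
    linear_combination h1 - g 1 * dji - g 2 * djj - g 0 * hCm
  have e2 : g 1 * c = 0 := by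
    have h1 : Cf (g 0 • f m + g 1 • f i + g 2 • f j) m j = 0 := by rw [hg', Cf_zero]
    rw [hexp] at h1
    have d1 : Cf (f m) m j = 0 := by rw [Cf_antisymm, dmj, neg_zero]
    have d2 : Cf (f j) m j = 0 := diagC hsum m j
    linear_combination h1 - g 0 * d1 - g 2 * d2 - g 1 * hui
  have e3 : g 2 * c = 0 := by
    have h1 : Cf (g 0 • f m + g 1 • f i + g 2 • f j) m i = 0 := by rw [hg', Cf_zero]
    rw [hexp] at h1
    have d1 : Cf (f m) m i = 0 := by rw [Cf_antisymm, dmi, neg_zero]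
    have d2 : Cf (f i) m i = 0 := diagC hsum m i
    linear_combination g 0 * d1 + g 1 * d2 + g 2 * huj - h1
  have hc0 : c ≠ 0 := hq
  have z0 : g 0 = 0 := by rcases mul_eq_zero.mp e1 with h | h; exact h; exact absurd h hc0
  have z1 : g 1 = 0 := by rcases mul_eq_zero.mp e2 with h | h; exact h; exact absurd h hc0
  have z2 : g 2 = 0 := by rcases mul_eq_zero.mp e3 with h | h; exact h; exact absurd h hc0
  fin_cases i0 <;> simp_all

/-- The map `(x₁,…,xₙ) ∈ Xⁿ ↦ ∑ φ_k(x_k)`. -/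
noncomputable def Psi (X : Submodule F (V F n)) : (Fin n → ↥X) →ₗ[F] W F n :=
  ∑ k : Fin n, (phi F n k).comp ((X.subtype).comp (LinearMap.proj k))

lemma Psi_apply (X : Submodule F (V F n)) (g : Fin n → ↥X) :
    Psi X g = ∑ k : Fin n, phi F n k (g k : V F n) := by
  simp [Psi]

lemma range_Psi (X : Submodule F (V F n)) :
    LinearMap.range (Psi X) = starV F n X := by
  apply le_antisymm
  · rintro y ⟨g, rfl⟩
    rw [Psi_apply]
    apply Submodule.sum_mem
    intro k _
    exact le_iSup (fun k => X.map (phi F n k)) k (Submodule.mem_map_of_mem (g k).2)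
  · rw [starV]
    apply iSup_le
    intro k
    rintro y ⟨x, hx, rfl⟩
    refine ⟨Pi.single k ⟨x, hx⟩, ?_⟩
    rw [Psi_apply, Finset.sum_eq_single k]
    · rw [Pi.single_eq_same]
    · intro k' _ hk'
      rw [Pi.single_eq_of_ne hk']
      simp
    · simp

lemma psi_inj (X : Submodule F (V F n))
    (hX : Module.finrank F ↥X = 1 ∨ Module.finrank F ↥X = 2) :
    Function.Injective (Psi X) := by
  rw [← LinearMap.ker_eq_bot, LinearMap.ker_eq_bot']
  intro g hg
  have hsum : (∑ k : Fin n, phi F n k ((fun k => (g k : V F n)) k)) = 0 := by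
    rw [← Psi_apply]; exact hg
  have hz : ∀ k, (g k : V F n) = 0 := by
    rcases hX with h | h
    · exact ftriv1 hsum (fun k => (g k).2) h
    · exact ftriv2 hsum (fun k => (g k).2) h
  funext k
  exact Subtype.ext (hz k)

lemma finrank_starV (X : Submodule F (V F n))
    (hX : Module.finrank F ↥X = 1 ∨ Module.finrank F ↥X = 2) :
    Module.finrank F ↥(starV F n X) = n * Module.finrank F ↥X := by
  rw [← range_Psi, LinearMap.finrank_range_of_inj (psi_inj X hX),
    Module.finrank_pi_fintype, Finset.sum_const, Finset.card_univ, Fintype.card_fin,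
    smul_eq_mul]

end Stmt8Aux

/-- If `X ≤ V(n)` with `dim X = 1` then `dim X* = n`; if `dim X = 2` then `dim X* = 2n`. -/
theorem statement8 (p : ℕ) [Fact p.Prime] (hp2 : p ≠ 2) (n : ℕ) (hn : 1 < n)
    (X : Submodule (ZMod p) (V (ZMod p) n)) :
    (Module.finrank (ZMod p) ↥X = 1 →
      Module.finrank (ZMod p) ↥(starV (ZMod p) n X) = n) ∧
    (Module.finrank (ZMod p) ↥X = 2 →
      Module.finrank (ZMod p) ↥(starV (ZMod p) n X) = 2 * n) := by
  constructor
  · intro hX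
    rw [Stmt8Aux.finrank_starV X (Or.inl hX), hX, mul_one]
  · intro hX
    rw [Stmt8Aux.finrank_starV X (Or.inr hX), hX, mul_comm]
end

section
/- Let X be a subspace of V(n). For 1 ≤ i ≤ n set Z_i := X ∩ φ_i⁻¹(span(φ_{i+1}(X) ∪ ⋯ ∪ φ_n(X))), let d_i := dim(X ∩ span{v[s,r] : i ≤ r < s ≤ n}), and let r_i := dim(Z_i). Then r_i ≤ C(d_i − r_i, 2). Moreover, if r_i > 0 and s_i is the smallest positive integer with r_i ≤ C(s_i, 2), then d_{i+1} ≤ d_i − s_i. -/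
open Submodule

variable (F : Type*) [Field F] (n : ℕ)

/-- `Z_i = X ∩ φ_i⁻¹(span(φ_{i+1}(X) ∪ ⋯ ∪ φ_n(X)))`. -/
noncomputable def Zsub (X : Submodule F (V F n)) (i : Fin n) : Submodule F (V F n) :=
  X ⊓ Submodule.comap (phi F n i)
    (⨆ j : Fin n, ⨆ _ : i < j, Submodule.map (phi F n j) X)

/-- `X ∩ span{v[s,r] : m ≤ r < s ≤ n}` (indices written 0-based, `m : ℕ`). -/
noncomputable def Dsub (X : Submodule F (V F n)) (m : ℕ) : Submodule F (V F n) :=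
  X ⊓ Submodule.span F
    {x : V F n | ∃ s r : Fin n, m ≤ (r : ℕ) ∧ r < s ∧ x = v F n s r}

namespace SimsAux

variable {F : Type*} [Field F] {n : ℕ}

variable {F : Type*} [Field F] {n : ℕ}

/-- The total antisymmetrized coefficient function of `x : V F n`. -/
noncomputable def AhatL (F : Type*) [Field F] (n : ℕ) : V F n →ₗ[F] (Fin n → Fin n → F) where
  toFun x c e := if h : e < c then x ⟨(c, e), h⟩ else if h' : c < e then -x ⟨(e, c), h'⟩ else 0
  map_add' x y := by
    funext c e
    by_cases h : e < c
    · simp [h]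
    · by_cases h' : c < e <;> simp [h, h', neg_add, add_comm]
  map_smul' a x := by
    funext c e
    by_cases h : e < c
    · simp [h]
    · by_cases h' : c < e <;> simp [h, h', mul_comm]

lemma AhatL_apply_lt (x : V F n) {c e : Fin n} (h : e < c) :
    AhatL F n x c e = x ⟨(c, e), h⟩ := by
  show dite _ _ _ = _
  rw [dif_pos h]

lemma AhatL_apply_gt (x : V F n) {c e : Fin n} (h : c < e) :
    AhatL F n x c e = -x ⟨(e, c), h⟩ := by
  show dite _ _ _ = _
  rw [dif_neg (asymm h), dif_pos h]

lemma AhatL_antisymm (x : V F n) (c e : Fin n) :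
    AhatL F n x c e = -AhatL F n x e c := by
  rcases lt_trichotomy e c with h | h | h
  · rw [AhatL_apply_lt x h, AhatL_apply_gt x h]; ring
  · subst h
    show dite _ _ _ = -dite _ _ _
    rw [dif_neg (lt_irrefl _), dif_neg (lt_irrefl _), neg_zero]
  · rw [AhatL_apply_gt x h, AhatL_apply_lt x h]

lemma AhatL_single (q : VIdx n) (c e : Fin n) :
    AhatL F n (Pi.single q 1) c e =
      (if c = q.1.1 ∧ e = q.1.2 then 1 else 0) - (if e = q.1.1 ∧ c = q.1.2 then 1 else 0) := by
  classical
  obtain ⟨⟨a, b⟩, hba⟩ := q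
  replace hba : b < a := hba
  rcases lt_trichotomy e c with h | h | h
  · rw [AhatL_apply_lt _ h]
    simp only [Pi.single_apply, Subtype.mk.injEq, Prod.mk.injEq]
    split_ifs <;>
      first
        | ring1
        | (exfalso; simp only [Fin.lt_def, Fin.le_def, Fin.ext_iff] at *; omega)
  · subst h
    show dite _ _ _ = _
    rw [dif_neg (lt_irrefl _), dif_neg (lt_irrefl _)]
    split_ifs <;>
      first
        | ring1
        | (exfalso; simp only [Fin.lt_def, Fin.le_def, Fin.ext_iff] at *; omega)
  · rw [AhatL_apply_gt _ h]
    simp only [Pi.single_apply, Subtype.mk.injEq, Prod.mk.injEq]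
    split_ifs <;>
      first
        | ring1
        | (exfalso; simp only [Fin.lt_def, Fin.le_def, Fin.ext_iff] at *; omega)

lemma w_apply (a b c : Fin n) (t : WIdx n) :
    w F n a b c t = if b < a ∧ b ≤ c ∧ t.1 = (a, b, c) then 1 else 0 := by
  classical
  by_cases h : b < a ∧ b ≤ c
  · rw [w, dif_pos h]
    simp only [Pi.single_apply, Subtype.ext_iff, h.1, h.2, true_and]
  · rw [w, dif_neg h]
    rw [if_neg (by tauto)]
    rfl

set_option maxHeartbeats 1600000 in
lemma phi_apply (j : Fin n) (t : WIdx n) (z : V F n) :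
    phi F n j z t =
      (if t.1.2.2 = j then AhatL F n z t.1.1 t.1.2.1 else 0) +
      (if t.1.2.1 = j ∧ j < t.1.2.2 then AhatL F n z t.1.1 t.1.2.2 else 0) := by
  classical
  have key : ((LinearMap.proj t : W F n →ₗ[F] F).comp (phi F n j)) =
      (if t.1.2.2 = j then (1 : F) else 0) •
        ((LinearMap.proj t.1.2.1 : (Fin n → F) →ₗ[F] F).comp
          (((LinearMap.proj t.1.1 : (Fin n → Fin n → F) →ₗ[F] (Fin n → F))).comp (AhatL F n))) +
      (if t.1.2.1 = j ∧ j < t.1.2.2 then (1 : F) else 0) •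
        ((LinearMap.proj t.1.2.2 : (Fin n → F) →ₗ[F] F).comp
          (((LinearMap.proj t.1.1 : (Fin n → Fin n → F) →ₗ[F] (Fin n → F))).comp (AhatL F n))) := by
    apply Module.Basis.ext (Pi.basisFun F (VIdx n))
    intro q
    obtain ⟨⟨c, m, e⟩, hmc, hme⟩ := t
    obtain ⟨⟨av, bv⟩, hba⟩ := q
    replace hba : bv < av := hba
    replace hmc : m < c := hmc
    replace hme : m ≤ e := hme
    simp only [LinearMap.comp_apply, LinearMap.proj_apply, LinearMap.add_apply,
      LinearMap.smul_apply, smul_eq_mul, Pi.basisFun_apply]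
    rw [show phi F n j (Pi.single (⟨(av, bv), hba⟩ : VIdx n) 1) =
        (if (⟨(av, bv), hba⟩ : VIdx n).1.2 ≤ j then w F n av bv j
          else w F n av j bv - w F n bv j av) from ?_]
    swap
    · have := Module.Basis.constr_basis (Pi.basisFun F (VIdx n)) F
        (fun q : VIdx n =>
          if q.1.2 ≤ j then w F n q.1.1 q.1.2 j
          else w F n q.1.1 j q.1.2 - w F n q.1.2 j q.1.1) ⟨(av, bv), hba⟩
      rw [Pi.basisFun_apply] at this
      exact this
    · clear z
      by_cases hbj : bv ≤ j
      · rw [if_pos hbj]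
        simp only [w_apply, AhatL_single, Subtype.mk.injEq, Prod.mk.injEq] at *
        try dsimp only at *
        split_ifs <;>
          first
            | ring1
            | (exfalso; simp only [Fin.lt_def, Fin.le_def, Fin.ext_iff] at *; omega)
      · rw [if_neg hbj]
        simp only [Pi.sub_apply, w_apply, AhatL_single, Subtype.mk.injEq, Prod.mk.injEq] at *
        try dsimp only at *
        split_ifs <;>
          first
            | ring1
            | (exfalso; simp only [Fin.lt_def, Fin.le_def, Fin.ext_iff] at *; omega)
  have h2 := LinearMap.congr_fun key z
  simp only [LinearMap.comp_apply, LinearMap.proj_apply, LinearMap.add_apply,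
    LinearMap.smul_apply, smul_eq_mul, ite_mul, one_mul, zero_mul] at h2
  exact h2


/-- The subspace of `V F n` of vectors supported on pairs `(s,r)` with `r ≥ m`. -/
def VsubM (F : Type*) [Field F] (n m : ℕ) : Submodule F (V F n) where
  carrier := {y | ∀ q : VIdx n, (q.1.2 : ℕ) < m → y q = 0}
  add_mem' := by
    intro a b ha hb q hq
    simp [ha q hq, hb q hq]
  zero_mem' := by intro q hq; rfl
  smul_mem' := by
    intro c a ha q hq
    simp [ha q hq]

lemma mem_VsubM {F : Type*} [Field F] {n m : ℕ} {y : V F n} :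
    y ∈ VsubM F n m ↔ ∀ q : VIdx n, (q.1.2 : ℕ) < m → y q = 0 := Iff.rfl

/-- The "column extraction at `i`" linear map. -/
noncomputable def rhoL (F : Type*) [Field F] (n : ℕ) (i : Fin n) :
    V F n →ₗ[F] (Fin n → F) where
  toFun z c := if h : i < c then z ⟨(c, i), h⟩ else 0
  map_add' x y := by
    funext c
    by_cases h : i < c <;> simp [h]
  map_smul' a x := by
    funext c
    by_cases h : i < c <;> simp [h]

variable {F : Type*} [Field F] {n : ℕ}

lemma span_v_eq (m : ℕ) :
    Submodule.span F {x : V F n | ∃ s r : Fin n, m ≤ (r : ℕ) ∧ r < s ∧ x = v F n s r} =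
      VsubM F n m := by
  classical
  apply le_antisymm
  · rw [Submodule.span_le]
    rintro x ⟨s, r, hmr, hrs, rfl⟩ q hq
    rw [v, dif_pos hrs]
    rw [Pi.single_apply, if_neg]
    intro hqe
    subst hqe
    simp only at hq
    omega
  · intro y hy
    have hrepr : y = ∑ q : VIdx n, Pi.single q (y q) := by
      rw [Finset.univ_sum_single]
    rw [hrepr]
    apply Submodule.sum_mem
    intro q _
    by_cases hq : (q.1.2 : ℕ) < m
    · rw [hy q hq]
      simp [Submodule.zero_mem]
    · have hv : Pi.single q (y q) = y q • v F n q.1.1 q.1.2 := by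
        rw [v, dif_pos q.2, ← Pi.single_smul, smul_eq_mul, mul_one]
      rw [hv]
      exact Submodule.smul_mem _ _
        (Submodule.subset_span ⟨q.1.1, q.1.2, by omega, q.2, rfl⟩)

lemma Dsub_eq (X : Submodule F (V F n)) (m : ℕ) :
    Dsub F n X m = X ⊓ VsubM F n m := by
  rw [Dsub, span_v_eq]

lemma zsub_rep {X : Submodule F (V F n)} {i : Fin n} {x : V F n}
    (hx : phi F n i x ∈ ⨆ j : Fin n, ⨆ _ : i < j, Submodule.map (phi F n j) X) :
    ∃ y : Fin n → V F n, (∀ j, y j ∈ X) ∧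
      phi F n i x = ∑ j : Fin n, if i < j then phi F n j (y j) else 0 := by
  classical
  refine Submodule.iSup_induction
    (fun j : Fin n => ⨆ _ : i < j, Submodule.map (phi F n j) X) hx
    (motive := fun w => ∃ y : Fin n → V F n, (∀ j, y j ∈ X) ∧
      w = ∑ j : Fin n, if i < j then phi F n j (y j) else 0) ?_ ?_ ?_
  · intro j w hw
    by_cases hij : i < j
    · replace hw : w ∈ ⨆ _ : i < j, Submodule.map (phi F n j) X := hw
      rw [iSup_pos hij] at hw
      obtain ⟨yj, hyjX, rfl⟩ := hw
      refine ⟨fun j' => if j' = j then yj else 0, ?_, ?_⟩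
      · intro j'
        by_cases h : j' = j
        · simpa [h] using hyjX
        · simp [h, X.zero_mem]
      · rw [Finset.sum_eq_single j]
        · simp [hij]
        · intro j' _ hne
          simp [hne]
        · intro h
          exact absurd (Finset.mem_univ j) h
    · replace hw : w ∈ ⨆ _ : i < j, Submodule.map (phi F n j) X := hw
      rw [iSup_neg hij] at hw
      rw [Submodule.mem_bot] at hw
      subst hw
      exact ⟨0, fun j => X.zero_mem, by simp⟩
  · exact ⟨0, fun j => X.zero_mem, by simp⟩
  · rintro w w' ⟨y, hy, rfl⟩ ⟨y', hy', rfl⟩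
    refine ⟨y + y', fun j => X.add_mem (hy j) (hy' j), ?_⟩
    rw [← Finset.sum_add_distrib]
    apply Finset.sum_congr rfl
    intro j _
    split_ifs
    · rw [Pi.add_apply, map_add]
    · rw [add_zero]

/-- The key structural facts about elements of `Z_i`. -/
lemma zsub_struct {X : Submodule F (V F n)} {i : Fin n} {x : V F n}
    (hx : x ∈ Zsub F n X i) :
    (∀ q : VIdx n, (q.1.2 : ℕ) ≤ (i : ℕ) → x q = 0) ∧
      (∀ e : Fin n, (fun c => AhatL F n x c e) ∈
        Submodule.map (rhoL F n i) (X ⊓ VsubM F n (i : ℕ))) := by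
  classical
  have hx' : x ∈ X ∧ x ∈ Submodule.comap (phi F n i)
      (⨆ j : Fin n, ⨆ _ : i < j, Submodule.map (phi F n j) X) := by
    rw [Zsub] at hx
    exact Submodule.mem_inf.mp hx
  obtain ⟨hxX, hxS⟩ := hx'
  rw [Submodule.mem_comap] at hxS
  obtain ⟨y, hyX, heq⟩ := zsub_rep hxS
  -- the master family of scalar equations
  have E : ∀ t : WIdx n,
      ((if t.1.2.2 = i then AhatL F n x t.1.1 t.1.2.1 else 0) +
        (if t.1.2.1 = i ∧ i < t.1.2.2 then AhatL F n x t.1.1 t.1.2.2 else 0)) =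
      ∑ j : Fin n, if i < j then
        ((if t.1.2.2 = j then AhatL F n (y j) t.1.1 t.1.2.1 else 0) +
          (if t.1.2.1 = j ∧ j < t.1.2.2 then AhatL F n (y j) t.1.1 t.1.2.2 else 0)) else 0 := by
    intro t
    have h0 := congrFun heq t
    rw [phi_apply] at h0
    rw [h0, Finset.sum_apply]
    apply Finset.sum_congr rfl
    intro j _
    by_cases hij : i < j
    · rw [if_pos hij, if_pos hij, phi_apply]
    · rw [if_neg hij, if_neg hij]
      rfl
  -- E1 : coefficients x_(c,m) with m ≤ i vanish
  have E1 : ∀ q : VIdx n, (q.1.2 : ℕ) ≤ (i : ℕ) → x q = 0 := by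
    rintro ⟨⟨c, m⟩, hmc⟩ hmi
    replace hmc : m < c := hmc
    simp only at hmi
    have hE := E ⟨(c, m, i), hmc, by rwa [Fin.le_def]⟩
    simp only at hE
    rw [if_pos trivial, if_neg (by rintro ⟨_, h⟩; exact lt_irrefl _ h), add_zero] at hE
    have h0 : AhatL F n x c m = 0 := by
      refine hE.trans (Finset.sum_eq_zero ?_)
      intro j _
      by_cases hij : i < j
      · rw [if_pos hij, if_neg (ne_of_lt hij), if_neg (fun h => absurd h.2 (asymm hij)),
          add_zero]
      · rw [if_neg hij]
    exact (AhatL_apply_lt x hmc).symm.trans h0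
  -- E2 : the y_j for i < j are supported on pairs (s,r) with r ≥ i
  have E2 : ∀ j : Fin n, i < j → y j ∈ VsubM F n (i : ℕ) := by
    intro j hij
    have hij' : (i : ℕ) < (j : ℕ) := hij
    rintro ⟨⟨c, m⟩, hmc⟩ hmi
    replace hmc : m < c := hmc
    simp only at hmi
    have hmj : m ≤ j := by rw [Fin.le_def]; omega
    have hE := E ⟨(c, m, j), hmc, hmj⟩
    simp only at hE
    rw [if_neg (Fin.ne_of_val_ne (by omega)),
      if_neg (fun h => absurd (congrArg Fin.val h.1) (by omega)), add_zero] at hE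
    rw [Finset.sum_eq_single j] at hE
    · rw [if_pos hij, if_pos rfl,
        if_neg (fun h => absurd (congrArg Fin.val h.1) (by omega)), add_zero] at hE
      rw [← AhatL_apply_lt (y j) hmc, ← hE]
    · intro j' _ hne
      by_cases hij' : i < j'
      · rw [if_pos hij', if_neg (fun h => hne h.symm),
          if_neg (fun h => absurd (congrArg Fin.val h.1) (by omega)), add_zero]
      · rw [if_neg hij']
    · intro h; exact absurd (Finset.mem_univ j) h
  -- E3 : columns of the antisymmetrized matrix are the i-columns of the y_e
  have E3 : ∀ (c e : Fin n) (hic : i < c), i < e →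
      AhatL F n x c e = y e ⟨(c, i), hic⟩ := by
    intro c e hic hie
    have hie' : (i : ℕ) < (e : ℕ) := hie
    have hE := E ⟨(c, i, e), hic, le_of_lt hie⟩
    simp only at hE
    rw [if_neg (Fin.ne_of_val_ne (by omega)), if_pos ⟨trivial, hie⟩, zero_add] at hE
    rw [Finset.sum_eq_single e] at hE
    · rw [if_pos hie, if_pos rfl,
        if_neg (fun h => absurd (congrArg Fin.val h.1) (by omega)), add_zero] at hE
      rw [hE, AhatL_apply_lt (y e) hic]
    · intro j' _ hne
      by_cases hij' : i < j'
      · have : (i : ℕ) < (j' : ℕ) := hij'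
        rw [if_pos hij', if_neg (fun h => hne h.symm),
          if_neg (fun h => absurd (congrArg Fin.val h.1) (by omega)), add_zero]
      · rw [if_neg hij']
    · intro h; exact absurd (Finset.mem_univ e) h
  refine ⟨E1, ?_⟩
  intro e
  by_cases hie : i < e
  · refine ⟨y e, ⟨hyX e, E2 e hie⟩, ?_⟩
    funext c
    show (if h : i < c then y e ⟨(c, i), h⟩ else 0) = AhatL F n x c e
    split_ifs with hic
    · exact (E3 c e hic hie).symm
    · have hce : c < e := lt_of_le_of_lt (not_lt.mp hic) hie
      rw [AhatL_apply_gt x hce, E1 ⟨(e, c), hce⟩ (by simpa using not_lt.mp hic), neg_zero]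
  · have hei : (e : ℕ) ≤ (i : ℕ) := by omega
    refine ⟨0, ⟨X.zero_mem, (VsubM F n (i:ℕ)).zero_mem⟩, ?_⟩
    rw [map_zero]
    funext c
    rw [Pi.zero_apply]
    rcases lt_trichotomy e c with h | h | h
    · rw [AhatL_apply_lt x h, E1 ⟨(c, e), h⟩ hei]
    · subst h
      show (0 : F) = dite _ _ _
      rw [dif_neg (lt_irrefl _), dif_neg (lt_irrefl _)]
    · have hci : (c : ℕ) ≤ (i : ℕ) := by
        have := h
        rw [Fin.lt_def] at this
        omega
      rw [AhatL_apply_gt x h, E1 ⟨(e, c), h⟩ hci, neg_zero]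

lemma card_VIdx (k : ℕ) : Fintype.card (VIdx k) = k.choose 2 := by
  classical
  have e : VIdx k ≃ Σ a : Fin k, Fin (a : ℕ) :=
    { toFun := fun q => ⟨q.1.1, ⟨(q.1.2 : ℕ), q.2⟩⟩
      invFun := fun s => ⟨(s.1, ⟨(s.2 : ℕ), lt_trans s.2.isLt s.1.isLt⟩), s.2.isLt⟩
      left_inv := by
        rintro ⟨⟨a, b⟩, h⟩
        rfl
      right_inv := by
        rintro ⟨a, b⟩
        rfl }
  rw [Fintype.card_congr e, Fintype.card_sigma]
  simp only [Fintype.card_fin]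
  rw [show (∑ x : Fin k, (x : ℕ)) = ∑ i ∈ Finset.range k, i from
    Fin.sum_univ_eq_sum_range (fun i => i) k]
  rw [Finset.sum_range_id, Nat.choose_two_right]

/-- The abstract injection lemma: if all columns of the antisymmetrized coefficient
matrix of every `x ∈ Z` lie in `P`, then `dim Z ≤ C(dim P, 2)`. -/
lemma finrank_le_choose (hchar : (2 : F) ≠ 0) (Z : Submodule F (V F n))
    (P : Submodule F (Fin n → F))
    (hZ : ∀ x ∈ Z, ∀ e : Fin n, (fun c => AhatL F n x c e) ∈ P) :
    Module.finrank F Z ≤ (Module.finrank F P).choose 2 := by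
  classical
  set k := Module.finrank F P with hk
  obtain ⟨Q, hQ⟩ := Submodule.exists_isCompl P
  let pr := P.linearProjOfIsCompl Q hQ
  let bP := Module.finBasis F P
  let π : (Fin n → F) →ₗ[F] (Fin k → F) := (bP.equivFun : P ≃ₗ[F] (Fin k → F)).toLinearMap ∘ₗ pr
  have hπu : ∀ a b : Fin k, π ((bP a : Fin n → F)) b = if a = b then 1 else 0 := by
    intro a b
    show (bP.equivFun (P.projectionOnto Q hQ (bP a : Fin n → F))) b = _
    rw [Submodule.linearProjOfIsCompl_apply_left hQ (bP a)]
    exact bP.equivFun_self a b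
  have hrecon : ∀ p : Fin n → F, p ∈ P → (∑ a, π p a • (bP a : Fin n → F)) = p := by
    intro p hp
    have h1 : pr p = ⟨p, hp⟩ := Submodule.linearProjOfIsCompl_apply_left hQ ⟨p, hp⟩
    have h2 := bP.sum_equivFun ⟨p, hp⟩
    calc ∑ a, π p a • (bP a : Fin n → F)
        = ((∑ a, bP.equivFun ⟨p, hp⟩ a • bP a : P) : Fin n → F) := by
          push_cast [Submodule.coe_sum]
          apply Finset.sum_congr rfl
          intro a _
          show π p a • (bP a : Fin n → F) = ((bP.equivFun ⟨p, hp⟩ a • bP a : P) : Fin n → F)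
          rw [Submodule.coe_smul]
          congr 1
          show (bP.equivFun (pr p)) a = _
          rw [h1]
      _ = p := by rw [h2]
  -- the relevant linear maps
  let Pmat : (Fin n → Fin n → F) →ₗ[F] (Fin k → Fin n → F) :=
    { toFun := fun A a e => π (fun c => A c e) a
      map_add' := by
        intro A B
        funext a e
        show π (fun c => A c e + B c e) a = _
        rw [show (fun c => A c e + B c e) = (fun c => A c e) + (fun c => B c e) from rfl,
          map_add]
        rfl
      map_smul' := by
        intro r A
        funext a e
        show π (fun c => r • A c e) a = _
        rw [show (fun c => r • A c e) = r • (fun c => A c e) from rfl, map_smul]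
        rfl }
  let Qmat : (Fin k → Fin n → F) →ₗ[F] (Fin k → Fin k → F) :=
    { toFun := fun G a b => π (G a) b
      map_add' := by
        intro A B
        funext a b
        show π (A a + B a) b = _
        rw [map_add]
        rfl
      map_smul' := by
        intro r A
        funext a b
        show π (r • A a) b = _
        rw [map_smul]
        rfl }
  let Low : (Fin k → Fin k → F) →ₗ[F] (VIdx k → F) :=
    { toFun := fun M q => M q.1.1 q.1.2
      map_add' := by intro A B; rfl
      map_smul' := by intro r A; rfl }
  let Λ : Z →ₗ[F] (VIdx k → F) := Low ∘ₗ Qmat ∘ₗ Pmat ∘ₗ (AhatL F n) ∘ₗ Z.subtype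
  have hinj : Function.Injective Λ := by
    rw [← LinearMap.ker_eq_bot, LinearMap.ker_eq_bot']
    rintro ⟨x, hxZ⟩ hx0
    have hcol : ∀ e, (fun c => AhatL F n x c e) ∈ P := hZ x hxZ
    set A : Fin n → Fin n → F := AhatL F n x with hA
    have hanti : ∀ c e, A c e = -A e c := fun c e => AhatL_antisymm x c e
    let u : Fin k → Fin n → F := fun a => ((bP a : P) : Fin n → F)
    let Gf : Fin k → Fin n → F := fun a e => π (fun c => A c e) a
    let Mf : Fin k → Fin k → F := fun a b => π (Gf a) b
    have hM0 : ∀ a b : Fin k, b < a → Mf a b = 0 := by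
      intro a b hba
      exact congrFun hx0 ⟨(a, b), hba⟩
    have h1 : ∀ c e, A c e = ∑ a, Gf a e * u a c := by
      intro c e
      have h := congrFun (hrecon _ (hcol e)) c
      rw [Finset.sum_apply] at h
      simp only [Pi.smul_apply, smul_eq_mul] at h
      exact h.symm
    have h2 : ∀ a e, Gf a e = -∑ b, Mf b a * u b e := by
      intro a e
      have hAe : (fun c => A c e) = -∑ b, u b e • Gf b := by
        funext c
        rw [Pi.neg_apply, Finset.sum_apply]
        simp only [Pi.smul_apply, smul_eq_mul]
        rw [hanti c e, h1 e c]
        rw [neg_inj]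
        apply Finset.sum_congr rfl
        intro b _
        ring
      show π (fun c => A c e) a = _
      rw [hAe, map_neg, map_sum, Pi.neg_apply, Finset.sum_apply, neg_inj]
      apply Finset.sum_congr rfl
      intro b _
      rw [map_smul, Pi.smul_apply, smul_eq_mul, mul_comm]
    have h3 : ∀ a b, Mf a b = -Mf b a := by
      intro a b
      have hGa : Gf a = -∑ c, Mf c a • u c := by
        funext e
        rw [h2 a e, Pi.neg_apply, Finset.sum_apply, neg_inj]
        apply Finset.sum_congr rfl
        intro c _
        rw [Pi.smul_apply, smul_eq_mul]
      show π (Gf a) b = _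
      rw [hGa, map_neg, map_sum, Pi.neg_apply, Finset.sum_apply, neg_inj]
      have : ∀ c : Fin k, (π (Mf c a • u c)) b = if c = b then Mf c a else 0 := by
        intro c
        rw [map_smul, Pi.smul_apply, smul_eq_mul, hπu]
        by_cases h : c = b <;> simp [h]
      rw [Finset.sum_congr rfl fun c _ => this c, Finset.sum_ite_eq' Finset.univ b]
      simp
    have hdiag : ∀ a, Mf a a = 0 := by
      intro a
      have h := h3 a a
      have h2m : (2 : F) * Mf a a = 0 := by
        rw [two_mul]
        rw [eq_neg_iff_add_eq_zero] at h
        exact h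
      rcases mul_eq_zero.mp h2m with h | h
      · exact absurd h hchar
      · exact h
    have hMall : ∀ a b, Mf a b = 0 := by
      intro a b
      rcases lt_trichotomy b a with h | h | h
      · exact hM0 a b h
      · subst h; exact hdiag b
      · rw [h3 a b, hM0 b a h, neg_zero]
    have hG0 : ∀ a e, Gf a e = 0 := by
      intro a e
      rw [h2 a e]
      simp [hMall]
    have hA0 : ∀ c e, A c e = 0 := by
      intro c e
      rw [h1 c e]
      simp [hG0]
    apply Subtype.ext
    funext q
    obtain ⟨⟨c, m⟩, hmc⟩ := q
    replace hmc : m < c := hmc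
    show x ⟨(c, m), hmc⟩ = 0
    rw [← AhatL_apply_lt x hmc]
    exact hA0 c m
  have hle := LinearMap.finrank_le_finrank_of_injective hinj
  rwa [Module.finrank_pi, card_VIdx] at hle

lemma rhoL_apply (i : Fin n) (z : V F n) (c : Fin n) :
    rhoL F n i z c = if h : i < c then z ⟨(c, i), h⟩ else 0 := rfl

lemma VsubM_mono (m : ℕ) : VsubM F n (m + 1) ≤ VsubM F n m := by
  intro z hz q hq
  exact hz q (by omega)

set_option synthInstance.maxHeartbeats 1000000 in
set_option maxHeartbeats 1000000 in
lemma rank_nullity_rho (X : Submodule F (V F n)) (i : Fin n) :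
    Module.finrank F (Submodule.map (rhoL F n i) (X ⊓ VsubM F n (i : ℕ))) +
      Module.finrank F (X ⊓ VsubM F n ((i : ℕ) + 1) : Submodule F (V F n)) =
      Module.finrank F (X ⊓ VsubM F n (i : ℕ) : Submodule F (V F n)) := by
  classical
  set S := X ⊓ VsubM F n (i : ℕ) with hS
  let f := (rhoL F n i) ∘ₗ S.subtype
  have hT : X ⊓ VsubM F n ((i : ℕ) + 1) ≤ S := inf_le_inf_left X (VsubM_mono (i : ℕ))
  have hrange : LinearMap.range f = Submodule.map (rhoL F n i) S := by
    rw [LinearMap.range_comp, Submodule.range_subtype]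
  have hker : LinearMap.ker f = Submodule.comap S.subtype (X ⊓ VsubM F n ((i : ℕ) + 1)) := by
    ext zz
    obtain ⟨z, hzS⟩ := zz
    have hzX : z ∈ X := (Submodule.mem_inf.mp hzS).1
    have hzV : z ∈ VsubM F n (i : ℕ) := (Submodule.mem_inf.mp hzS).2
    rw [LinearMap.mem_ker, Submodule.mem_comap]
    constructor
    · intro h0
      refine Submodule.mem_inf.mpr ⟨hzX, ?_⟩
      rintro ⟨⟨s, r⟩, hrs⟩ hq
      simp only at hq
      rcases Nat.lt_or_ge (r : ℕ) (i : ℕ) with hqi | hqi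
      · exact hzV ⟨(s, r), hrs⟩ hqi
      · have hqe : r = i := Fin.ext (by omega)
        subst hqe
        have hlt : r < s := hrs
        have hthis : rhoL F n r z s = 0 := congrFun h0 s
        rw [rhoL_apply, dif_pos hlt] at hthis
        exact hthis
    · intro hmem
      have hz3 : z ∈ VsubM F n ((i : ℕ) + 1) := (Submodule.mem_inf.mp hmem).2
      show rhoL F n i z = 0
      funext c
      rw [rhoL_apply]
      split_ifs with h
      · exact hz3 ⟨(c, i), h⟩ (by simp only; omega)
      · rfl
  have hrn := LinearMap.finrank_range_add_finrank_ker f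
  rw [hrange, hker] at hrn
  have hco : Module.finrank F
        ↥(Submodule.comap S.subtype (X ⊓ VsubM F n ((i : ℕ) + 1))) =
      Module.finrank F ↥(X ⊓ VsubM F n ((i : ℕ) + 1)) :=
    LinearEquiv.finrank_eq (Submodule.comapSubtypeEquivOfLe hT)
  rw [hco] at hrn
  exact hrn

lemma zsub_le_dsub (X : Submodule F (V F n)) (i : Fin n) :
    Zsub F n X i ≤ X ⊓ VsubM F n ((i : ℕ) + 1) := by
  intro x hx
  obtain ⟨hcoef, -⟩ := zsub_struct hx
  have hxX : x ∈ X := by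
    rw [Zsub] at hx
    exact (Submodule.mem_inf.mp hx).1
  refine Submodule.mem_inf.mpr ⟨hxX, ?_⟩
  intro q hq
  exact hcoef q (by omega)

end SimsAux

open SimsAux

/-- With `r_i = dim Z_i` and `d_i = dim(X ∩ span{v[s,r] : i ≤ r < s ≤ n})`, one has
`r_i ≤ C(d_i − r_i, 2)`; moreover if `r_i > 0` and `s_i` is the smallest positive integer
with `r_i ≤ C(s_i,2)`, then `d_{i+1} ≤ d_i − s_i`. -/
theorem statement12 (p : ℕ) [Fact p.Prime] (hp2 : p ≠ 2) (n : ℕ) (hn : 1 < n)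
    (X : Submodule (ZMod p) (V (ZMod p) n)) (i : Fin n) :
    Module.finrank (ZMod p) ↥(Zsub (ZMod p) n X i) ≤
      (Module.finrank (ZMod p) ↥(Dsub (ZMod p) n X (i : ℕ)) -
        Module.finrank (ZMod p) ↥(Zsub (ZMod p) n X i)).choose 2 ∧
    (0 < Module.finrank (ZMod p) ↥(Zsub (ZMod p) n X i) →
      ∀ s : ℕ, 0 < s →
        Module.finrank (ZMod p) ↥(Zsub (ZMod p) n X i) ≤ s.choose 2 →
        (∀ s' : ℕ, 0 < s' →
          Module.finrank (ZMod p) ↥(Zsub (ZMod p) n X i) ≤ s'.choose 2 → s ≤ s') →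
        Module.finrank (ZMod p) ↥(Dsub (ZMod p) n X ((i : ℕ) + 1)) ≤
          Module.finrank (ZMod p) ↥(Dsub (ZMod p) n X (i : ℕ)) - s) := by
  classical
  have hchar : (2 : ZMod p) ≠ 0 := by
    have hp := (Fact.out : p.Prime)
    intro h
    have h2 : ((2 : ℕ) : ZMod p) = 0 := by exact_mod_cast h
    rw [ZMod.natCast_eq_zero_iff] at h2
    rcases (Nat.prime_dvd_prime_iff_eq hp Nat.prime_two).mp h2 with h
    exact hp2 h
  set Z := Zsub (ZMod p) n X i with hZdef
  set P := Submodule.map (rhoL (ZMod p) n i) (X ⊓ VsubM (ZMod p) n (i : ℕ)) with hPdef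
  set k := Module.finrank (ZMod p) P with hkdef
  have hZP : ∀ x ∈ Z, ∀ e : Fin n, (fun c => AhatL (ZMod p) n x c e) ∈ P :=
    fun x hx => (zsub_struct hx).2
  have hbound : Module.finrank (ZMod p) ↥Z ≤ k.choose 2 := finrank_le_choose hchar Z P hZP
  have hrn : k + Module.finrank (ZMod p) ↥(Dsub (ZMod p) n X ((i : ℕ) + 1)) =
      Module.finrank (ZMod p) ↥(Dsub (ZMod p) n X (i : ℕ)) := by
    rw [Dsub_eq, Dsub_eq]
    exact rank_nullity_rho X i
  have hZD : Module.finrank (ZMod p) ↥Z ≤ Module.finrank (ZMod p) ↥(Dsub (ZMod p) n X ((i : ℕ) + 1)) := by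
    rw [Dsub_eq]
    exact Submodule.finrank_mono (zsub_le_dsub X i)
  constructor
  · calc Module.finrank (ZMod p) ↥Z ≤ k.choose 2 := hbound
      _ ≤ (Module.finrank (ZMod p) ↥(Dsub (ZMod p) n X (i : ℕ)) - Module.finrank (ZMod p) ↥Z).choose 2 :=
        Nat.choose_le_choose 2 (by omega)
  · intro hr0 s hs hrs hmin
    have hkpos : 0 < k := by
      rcases Nat.eq_zero_or_pos k with h | h
      · rw [h] at hbound
        have h02 : Nat.choose 0 2 = 0 := rfl
        omega
      · exact h
    have hsk : s ≤ k := hmin k hkpos hbound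
    omega
end
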